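/- arXiv:1508.04568 — 7 statements merged into one kernel-verified Lean document; each statement's English description precedes it below -/
import Mathlib

section
/- Let (V,ω) be a symplectic vector space, W ⊆ V a coisotropic subspace, and ρ : W → W/W^ω the quotient (reduction) map onto the reduced symplectic vector space (W/W^ω, [ω]), where [ω]([u],[v]) = ω(u,v). If L ⊆ V is an isotropic subspace, then ρ(L ∩ W) is an isotropic subspace of (W/W^ω, [ω]); if L is coisotropic, then ρ(L ∩ W) is coisotropic; in particular, if L is lagrangian, then ρ(L ∩ W) is lagrangian. -/
open Submodule Module

/-- The ω-orthogonal of a subspace: `W^ω = {v | ω(v,u) = 0 for all u ∈ W}`. -/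
def oOrtho {V : Type*} [AddCommGroup V] [Module ℝ V]
    (ω : V →ₗ[ℝ] V →ₗ[ℝ] ℝ) (W : Submodule ℝ V) : Submodule ℝ V where
  carrier := {v | ∀ u ∈ W, ω v u = 0}
  add_mem' := by
    intro a b ha hb u hu
    rw [Set.mem_setOf_eq] at *
    rw [map_add, LinearMap.add_apply, ha u hu, hb u hu, add_zero]
  zero_mem' := by intro u _; simp
  smul_mem' := by
    intro c a ha u hu
    rw [Set.mem_setOf_eq] at *
    rw [map_smul, LinearMap.smul_apply, ha u hu, smul_zero]

lemma oOrtho_eq {V : Type*} [AddCommGroup V] [Module ℝ V]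
    (ω : V →ₗ[ℝ] V →ₗ[ℝ] ℝ) (hωalt : ω.IsAlt) (N : Submodule ℝ V) :
    oOrtho ω N = LinearMap.BilinForm.orthogonal ω N := by
  ext v
  constructor
  · intro hv u hu
    exact hωalt.isRefl _ _ (hv u hu)
  · intro hv u hu
    exact hωalt.isRefl _ _ (hv u hu)

lemma oOrtho_inf {V : Type*} [AddCommGroup V] [Module ℝ V] [FiniteDimensional ℝ V]
    (ω : V →ₗ[ℝ] V →ₗ[ℝ] ℝ) (hωalt : ω.IsAlt) (hωnd : ω.Nondegenerate)
    (A B : Submodule ℝ V) :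
    oOrtho ω (A ⊓ B) = oOrtho ω A ⊔ oOrtho ω B := by
  have hrefl := hωalt.isRefl
  have hsup : ∀ C D : Submodule ℝ V,
      LinearMap.BilinForm.orthogonal ω (C ⊔ D) =
      LinearMap.BilinForm.orthogonal ω C ⊓ LinearMap.BilinForm.orthogonal ω D := by
    intro C D
    apply le_antisymm
    · exact le_inf (LinearMap.BilinForm.orthogonal_le le_sup_left)
        (LinearMap.BilinForm.orthogonal_le le_sup_right)
    · intro v hv u hu
      obtain ⟨a, ha, b, hb, rfl⟩ := Submodule.mem_sup.mp hu
      show ω (a + b) v = 0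
      rw [map_add, LinearMap.add_apply, hv.1 a ha, hv.2 b hb, add_zero]
  simp only [oOrtho_eq ω hωalt]
  have hA := LinearMap.BilinForm.orthogonal_orthogonal (B := ω) hωnd hrefl A
  have hB := LinearMap.BilinForm.orthogonal_orthogonal (B := ω) hωnd hrefl B
  conv_lhs => rw [← hA, ← hB]
  rw [← hsup, LinearMap.BilinForm.orthogonal_orthogonal (B := ω) hωnd hrefl]

/-- coisotropic reduction maps (co)isotropic subspaces to (co)isotropic
subspaces: if `W` is coisotropic with reduction map `ρ : W → W/W^ω` and reduced form
`[ω]`, and `L` is isotropic (resp. coisotropic, lagrangian), then `ρ(L ∩ W)` is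
isotropic (resp. coisotropic, lagrangian) in `(W/W^ω, [ω])`. -/
theorem stmt7
    {V : Type*} [AddCommGroup V] [Module ℝ V] [FiniteDimensional ℝ V]
    (ω : V →ₗ[ℝ] V →ₗ[ℝ] ℝ) (hωalt : ω.IsAlt) (hωnd : ω.Nondegenerate)
    (W : Submodule ℝ V) (hW : oOrtho ω W ≤ W)
    (Ω : (W ⧸ (oOrtho ω W).comap W.subtype) →ₗ[ℝ]
         (W ⧸ (oOrtho ω W).comap W.subtype) →ₗ[ℝ] ℝ)
    (hΩ : ∀ u v : W, Ω (Submodule.Quotient.mk u) (Submodule.Quotient.mk v) = ω (u : V) (v : V))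
    (L : Submodule ℝ V) :
    -- the image ρ(L ∩ W) in the reduced space
    (L ≤ oOrtho ω L →
      Submodule.map ((oOrtho ω W).comap W.subtype).mkQ ((L ⊓ W).comap W.subtype) ≤
        oOrtho Ω (Submodule.map ((oOrtho ω W).comap W.subtype).mkQ ((L ⊓ W).comap W.subtype))) ∧
    (oOrtho ω L ≤ L →
      oOrtho Ω (Submodule.map ((oOrtho ω W).comap W.subtype).mkQ ((L ⊓ W).comap W.subtype)) ≤
        Submodule.map ((oOrtho ω W).comap W.subtype).mkQ ((L ⊓ W).comap W.subtype)) ∧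
    (L = oOrtho ω L →
      Submodule.map ((oOrtho ω W).comap W.subtype).mkQ ((L ⊓ W).comap W.subtype) =
        oOrtho Ω (Submodule.map ((oOrtho ω W).comap W.subtype).mkQ ((L ⊓ W).comap W.subtype))) := by
  have hiso : L ≤ oOrtho ω L →
      Submodule.map ((oOrtho ω W).comap W.subtype).mkQ ((L ⊓ W).comap W.subtype) ≤
        oOrtho Ω (Submodule.map ((oOrtho ω W).comap W.subtype).mkQ ((L ⊓ W).comap W.subtype)) := by
    intro hL q hq u hu
    obtain ⟨x, hx, rfl⟩ := hq
    obtain ⟨y, hy, rfl⟩ := hu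
    rw [Submodule.mkQ_apply, Submodule.mkQ_apply, hΩ]
    exact hL (Submodule.mem_comap.mp hx).1 _ (Submodule.mem_comap.mp hy).1
  have hcoiso : oOrtho ω L ≤ L →
      oOrtho Ω (Submodule.map ((oOrtho ω W).comap W.subtype).mkQ ((L ⊓ W).comap W.subtype)) ≤
        Submodule.map ((oOrtho ω W).comap W.subtype).mkQ ((L ⊓ W).comap W.subtype) := by
    intro hL q hq
    obtain ⟨x, rfl⟩ := ((oOrtho ω W).comap W.subtype).mkQ_surjective q
    have hxorth : (x : V) ∈ oOrtho ω (L ⊓ W) := by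
      intro u hu
      have hu' : (⟨u, hu.2⟩ : W) ∈ (L ⊓ W).comap W.subtype := by
        exact Submodule.mem_comap.mpr hu
      have := hq (((oOrtho ω W).comap W.subtype).mkQ ⟨u, hu.2⟩) ⟨_, hu', rfl⟩
      rwa [Submodule.mkQ_apply, Submodule.mkQ_apply, hΩ] at this
    rw [oOrtho_inf ω hωalt hωnd L W] at hxorth
    have hxLW : (x : V) ∈ L ⊔ oOrtho ω W := (sup_le_sup hL le_rfl) hxorth
    obtain ⟨l, hl, w, hw, hlw⟩ := Submodule.mem_sup.mp hxLW
    have hwW : w ∈ W := hW hw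
    have hlW : l ∈ W := by
      have hle : l = (x : V) - w := by rw [← hlw, add_sub_cancel_right]
      rw [hle]; exact W.sub_mem x.2 hwW
    refine ⟨⟨l, hlW⟩, Submodule.mem_comap.mpr (by exact ⟨hl, hlW⟩), ?_⟩
    rw [Submodule.mkQ_apply, Submodule.mkQ_apply, Submodule.Quotient.eq]
    have heq : ((⟨l, hlW⟩ : W) - x : W) = (⟨-w, W.neg_mem hwW⟩ : W) := by
      ext
      show l - (x : V) = -w
      rw [← hlw]; abel
    rw [heq]
    exact Submodule.mem_comap.mpr (by simpa using (oOrtho ω W).neg_mem hw)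
  refine ⟨hiso, hcoiso, ?_⟩
  intro hLag
  exact le_antisymm (hiso hLag.le) (hcoiso hLag.ge)
end

section
/- (Witt–Artin decomposition) Let (V,ω) be a symplectic vector space, W ⊆ V any subspace, and let E be a complement of W ∩ W^ω in W and F a complement of W ∩ W^ω in W^ω. Then E and F are symplectic subspaces, E and F are ω-orthogonal to each other, V decomposes as the ω-orthogonal direct sum V = E ⊕ F ⊕ (E ⊕ F)^ω, and W ∩ W^ω is a lagrangian subspace of the symplectic subspace (E ⊕ F)^ω (with the restricted form). -/
open Submodule Module

/-- Witt–Artin decomposition: if `E` is a complement of `W ∩ W^ω` in `W`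
and `F` a complement of `W ∩ W^ω` in `W^ω`, then `E` and `F` are symplectic, ω-orthogonal
to each other, `V = E ⊕ F ⊕ (E ⊕ F)^ω` is an ω-orthogonal direct sum, and `W ∩ W^ω` is a
lagrangian subspace of the symplectic subspace `(E ⊕ F)^ω`. -/
theorem stmt8
    {V : Type*} [AddCommGroup V] [Module ℝ V] [FiniteDimensional ℝ V]
    (ω : V →ₗ[ℝ] V →ₗ[ℝ] ℝ) (hωalt : ω.IsAlt) (hωnd : ω.Nondegenerate)
    (W E F : Submodule ℝ V)
    -- E is a complement of W ∩ W^ω in W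
    (hE₁ : E ⊓ (W ⊓ oOrtho ω W) = ⊥) (hE₂ : E ⊔ (W ⊓ oOrtho ω W) = W)
    -- F is a complement of W ∩ W^ω in W^ω
    (hF₁ : F ⊓ (W ⊓ oOrtho ω W) = ⊥) (hF₂ : F ⊔ (W ⊓ oOrtho ω W) = oOrtho ω W) :
    -- E and F are symplectic subspaces
    E ⊓ oOrtho ω E = ⊥ ∧ F ⊓ oOrtho ω F = ⊥ ∧
    -- E and F are ω-orthogonal to each other
    (∀ e ∈ E, ∀ f ∈ F, ω e f = 0) ∧
    -- V = E ⊕ F ⊕ (E ⊕ F)^ω is a direct sum decomposition (automatically ω-orthogonal)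
    E ⊓ F = ⊥ ∧ (E ⊔ F) ⊓ oOrtho ω (E ⊔ F) = ⊥ ∧ E ⊔ F ⊔ oOrtho ω (E ⊔ F) = ⊤ ∧
    -- W ∩ W^ω is a lagrangian subspace of the symplectic subspace (E ⊕ F)^ω:
    W ⊓ oOrtho ω W ≤ oOrtho ω (E ⊔ F) ∧
    W ⊓ oOrtho ω W = oOrtho ω (W ⊓ oOrtho ω W) ⊓ oOrtho ω (E ⊔ F) := by

  classical
  have hrefl : ω.IsRefl := hωalt.isRefl
  set N : Submodule ℝ V := W ⊓ oOrtho ω W with hN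
  -- oOrtho agrees with Mathlib's orthogonal
  have hO : ∀ U : Submodule ℝ V, oOrtho ω U = LinearMap.BilinForm.orthogonal ω U := by
    intro U
    ext v
    constructor
    · intro hv u hu
      exact hrefl v u (hv u hu)
    · intro hv u hu
      exact hrefl u v (hv u hu)
  have hdouble : ∀ U : Submodule ℝ V, oOrtho ω (oOrtho ω U) = U := by
    intro U
    rw [hO, hO]
    exact LinearMap.BilinForm.orthogonal_orthogonal hωnd hrefl U
  have hEW : E ≤ W := le_sup_left.trans hE₂.le
  have hFWo : F ≤ oOrtho ω W := le_sup_left.trans hF₂.le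
  have hNW : N ≤ W := inf_le_left
  have hNWo : N ≤ oOrtho ω W := inf_le_right
  -- vanishing between W^ω and W both ways
  have h1 : ∀ x ∈ oOrtho ω W, ∀ y ∈ W, ω x y = 0 := fun x hx y hy => hx y hy
  have h2 : ∀ x ∈ W, ∀ y ∈ oOrtho ω W, ω x y = 0 := fun x hx y hy => hrefl y x (hy x hx)
  -- E is symplectic
  have hEsymp : E ⊓ oOrtho ω E = ⊥ := by
    rw [eq_bot_iff]
    rintro x hx
    obtain ⟨hxE, hxEo⟩ := Submodule.mem_inf.mp hx
    have hxWo : x ∈ oOrtho ω W := by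
      intro u hu
      rw [← hE₂] at hu
      obtain ⟨e, he, n, hn, rfl⟩ := Submodule.mem_sup.mp hu
      rw [map_add, hxEo e he, h2 x (hEW hxE) n (hNWo hn), add_zero]
    have : x ∈ E ⊓ N := Submodule.mem_inf.mpr ⟨hxE, Submodule.mem_inf.mpr ⟨hEW hxE, hxWo⟩⟩
    rw [hE₁] at this
    exact this
  -- F is symplectic
  have hFsymp : F ⊓ oOrtho ω F = ⊥ := by
    rw [eq_bot_iff]
    rintro x hx
    obtain ⟨hxF, hxFo⟩ := Submodule.mem_inf.mp hx
    have hxWoo : x ∈ oOrtho ω (oOrtho ω W) := by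
      intro u hu
      rw [← hF₂] at hu
      obtain ⟨f, hf, n, hn, rfl⟩ := Submodule.mem_sup.mp hu
      rw [map_add, hxFo f hf, h1 x (hFWo hxF) n (hNW hn), add_zero]
    rw [hdouble] at hxWoo
    have : x ∈ F ⊓ N := Submodule.mem_inf.mpr ⟨hxF, Submodule.mem_inf.mpr ⟨hxWoo, hFWo hxF⟩⟩
    rw [hF₁] at this
    exact this
  -- E and F are ω-orthogonal
  have hEF : ∀ e ∈ E, ∀ f ∈ F, ω e f = 0 := fun e he f hf =>
    h2 e (hEW he) f (hFWo hf)
  have hFE : ∀ f ∈ F, ∀ e ∈ E, ω f e = 0 := fun f hf e he =>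
    h1 f (hFWo hf) e (hEW he)
  -- E ⊓ F = ⊥
  have hEFbot : E ⊓ F = ⊥ := by
    rw [eq_bot_iff]
    rintro x hx
    obtain ⟨hxE, hxF⟩ := Submodule.mem_inf.mp hx
    have : x ∈ E ⊓ N := Submodule.mem_inf.mpr ⟨hxE,
      Submodule.mem_inf.mpr ⟨hEW hxE, hFWo hxF⟩⟩
    rw [hE₁] at this
    exact this
  -- E ⊔ F is symplectic
  have hEFsymp : (E ⊔ F) ⊓ oOrtho ω (E ⊔ F) = ⊥ := by
    rw [eq_bot_iff]
    rintro x hx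
    obtain ⟨hxEF, hxo⟩ := Submodule.mem_inf.mp hx
    obtain ⟨e, he, f, hf, rfl⟩ := Submodule.mem_sup.mp hxEF
    have he0 : e ∈ E ⊓ oOrtho ω E := by
      refine Submodule.mem_inf.mpr ⟨he, fun u hu => ?_⟩
      have := hxo u (le_sup_left (a := E) (b := F) hu)
      rw [map_add, LinearMap.add_apply, hFE f hf u hu, add_zero] at this
      exact this
    have hf0 : f ∈ F ⊓ oOrtho ω F := by
      refine Submodule.mem_inf.mpr ⟨hf, fun u hu => ?_⟩
      have := hxo u (le_sup_right (a := E) (b := F) hu)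
      rw [map_add, LinearMap.add_apply, hEF e he u hu, zero_add] at this
      exact this
    rw [hEsymp] at he0
    rw [hFsymp] at hf0
    rw [he0, hf0, add_zero]
    exact Submodule.zero_mem ⊥
  -- E ⊔ F ⊔ (E ⊔ F)^ω = ⊤
  have hsuptop : E ⊔ F ⊔ oOrtho ω (E ⊔ F) = ⊤ := by
    rw [hO]
    have hdisj : Disjoint (E ⊔ F) (LinearMap.BilinForm.orthogonal ω (E ⊔ F)) := by
      rw [disjoint_iff, ← hO]
      exact hEFsymp
    have hcompl := (LinearMap.BilinForm.isCompl_orthogonal_iff_disjoint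
      (B := ω) (W := E ⊔ F) hrefl).mpr hdisj
    exact hcompl.sup_eq_top
  -- N ≤ (E ⊔ F)^ω
  have hNle : N ≤ oOrtho ω (E ⊔ F) := by
    intro n hn u hu
    obtain ⟨e, he, f, hf, rfl⟩ := Submodule.mem_sup.mp hu
    rw [map_add, h1 n (hNWo hn) e (hEW he), h2 n (hNW hn) f (hFWo hf), add_zero]
  -- Lagrangian condition
  have hlag : N = oOrtho ω N ⊓ oOrtho ω (E ⊔ F) := by
    apply le_antisymm
    · intro n hn
      refine Submodule.mem_inf.mpr ⟨fun u hu => h1 n (hNWo hn) u (hNW hu), hNle hn⟩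
    · intro v hv
      obtain ⟨hvN, hvEF⟩ := Submodule.mem_inf.mp hv
      have hvE : ∀ u ∈ E, ω v u = 0 := fun u hu => hvEF u (le_sup_left (a := E) (b := F) hu)
      have hvF : ∀ u ∈ F, ω v u = 0 := fun u hu => hvEF u (le_sup_right (a := E) (b := F) hu)
      have hvWo : v ∈ oOrtho ω W := by
        intro u hu
        rw [← hE₂] at hu
        obtain ⟨e, he, n, hn, rfl⟩ := Submodule.mem_sup.mp hu
        rw [map_add, hvE e he, hvN n hn, add_zero]
      have hvW : v ∈ W := by
        rw [← hdouble W]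
        intro u hu
        rw [← hF₂] at hu
        obtain ⟨f, hf, n, hn, rfl⟩ := Submodule.mem_sup.mp hu
        rw [map_add, hvF f hf, hvN n hn, add_zero]
      exact Submodule.mem_inf.mpr ⟨hvW, hvWo⟩
  exact ⟨hEsymp, hFsymp, hEF, hEFbot, hEFsymp, hsuptop, hNle, hlag⟩
end

section
/- Let (X,ω_X), (Y,ω_Y), (Z,ω_Z) be symplectic vector spaces, let L₁ ⊆ X × Y be a linear canonical relation from X to Y and L₂ ⊆ Y × Z a linear canonical relation from Y to Z. Then the composition L₂ ∘ L₁ = {(x,z) ∈ X × Z : ∃ y ∈ Y, (x,y) ∈ L₁ and (y,z) ∈ L₂} is a linear canonical relation from X to Z. -/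
open Submodule Module

def prodForm {X Y : Type*} [AddCommGroup X] [Module ℝ X] [AddCommGroup Y] [Module ℝ Y]
    (ωX : X →ₗ[ℝ] X →ₗ[ℝ] ℝ) (ωY : Y →ₗ[ℝ] Y →ₗ[ℝ] ℝ) :
    (X × Y) →ₗ[ℝ] (X × Y) →ₗ[ℝ] ℝ :=
  LinearMap.mk₂ ℝ (fun p q => ωX p.1 q.1 - ωY p.2 q.2)
    (by intro m₁ m₂ n; simp [map_add, LinearMap.add_apply]; ring)
    (by intro c m n; simp [map_smul, LinearMap.smul_apply, smul_eq_mul]; ring)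
    (by intro m n₁ n₂; simp [map_add, LinearMap.add_apply]; ring)
    (by intro c m n; simp [map_smul, LinearMap.smul_apply, smul_eq_mul]; ring)

lemma mem_oOrtho_iff {V : Type*} [AddCommGroup V] [Module ℝ V]
    {ω : V →ₗ[ℝ] V →ₗ[ℝ] ℝ} {W : Submodule ℝ V} {v : V} :
    v ∈ oOrtho ω W ↔ ∀ u ∈ W, ω v u = 0 := Iff.rfl

lemma prodForm_apply {X Y : Type*} [AddCommGroup X] [Module ℝ X] [AddCommGroup Y] [Module ℝ Y]
    (ωX : X →ₗ[ℝ] X →ₗ[ℝ] ℝ) (ωY : Y →ₗ[ℝ] Y →ₗ[ℝ] ℝ) (p q : X × Y) :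
    prodForm ωX ωY p q = ωX p.1 q.1 - ωY p.2 q.2 := rfl

lemma prodForm_isAlt {X Y : Type*} [AddCommGroup X] [Module ℝ X] [AddCommGroup Y] [Module ℝ Y]
    {ωX : X →ₗ[ℝ] X →ₗ[ℝ] ℝ} {ωY : Y →ₗ[ℝ] Y →ₗ[ℝ] ℝ}
    (hX : ωX.IsAlt) (hY : ωY.IsAlt) : (prodForm ωX ωY).IsAlt := by
  intro p
  rw [prodForm_apply, hX p.1, hY p.2, sub_zero]

lemma prodForm_sep {X Y : Type*} [AddCommGroup X] [Module ℝ X] [AddCommGroup Y] [Module ℝ Y]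
    {ωX : X →ₗ[ℝ] X →ₗ[ℝ] ℝ} {ωY : Y →ₗ[ℝ] Y →ₗ[ℝ] ℝ}
    (hX : ωX.Nondegenerate) (hY : ωY.Nondegenerate) :
    ∀ p : X × Y, (∀ q : X × Y, prodForm ωX ωY p q = 0) → p = 0 := by
  intro p hp
  have h1 : p.1 = 0 := by
    apply hX.1
    intro x
    have := hp (x, 0)
    simpa [prodForm_apply] using this
  have h2 : p.2 = 0 := by
    apply hY.1
    intro y
    have := hp (0, y)
    simp only [prodForm_apply] at this
    have : ωY p.2 y = 0 := by
      have h0 : ωX p.1 (0 : X) = 0 := by simp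
      linarith [this]
    exact this
  exact Prod.ext h1 h2

lemma oOrtho_eq_orthogonal {V : Type*} [AddCommGroup V] [Module ℝ V]
    (ω : V →ₗ[ℝ] V →ₗ[ℝ] ℝ) (W : Submodule ℝ V) :
    oOrtho ω W = LinearMap.BilinForm.orthogonal ω.flip W := by
  ext v; exact Iff.rfl

lemma finrank_oOrtho_add {V : Type*} [AddCommGroup V] [Module ℝ V] [FiniteDimensional ℝ V]
    (ω : V →ₗ[ℝ] V →ₗ[ℝ] ℝ) (halt : ω.IsAlt)
    (hnd : ∀ m : V, (∀ n : V, ω m n = 0) → m = 0) (W : Submodule ℝ V) :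
    finrank ℝ W + finrank ℝ (oOrtho ω W) = finrank ℝ V := by
  have hrefl : ω.flip.IsRefl := fun x y h => halt.isRefl y x h
  have hnd' : LinearMap.BilinForm.Nondegenerate ω.flip := by
    refine ⟨fun m hm => ?_, fun m hm => hnd m hm⟩
    exact hnd m (fun n => halt.isRefl n m (hm n))
  rw [oOrtho_eq_orthogonal]
  have := LinearMap.BilinForm.finrank_add_finrank_orthogonal (B := ω.flip) hrefl W
  rw [LinearMap.BilinForm.orthogonal_top_eq_bot hnd', inf_bot_eq, finrank_bot, add_zero] at this
  exact this

/-- `p.prod q` has dimension `dim p + dim q`. -/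
lemma finrank_submodule_prod {A B : Type*} [AddCommGroup A] [Module ℝ A] [FiniteDimensional ℝ A]
    [AddCommGroup B] [Module ℝ B] [FiniteDimensional ℝ B]
    (p : Submodule ℝ A) (q : Submodule ℝ B) :
    finrank ℝ (p.prod q) = finrank ℝ p + finrank ℝ q := by
  have e : (p.prod q) ≃ₗ[ℝ] p × q :=
    { toFun := fun x => (⟨x.1.1, x.2.1⟩, ⟨x.1.2, x.2.2⟩)
      map_add' := by intros; rfl
      map_smul' := by intros; rfl
      invFun := fun y => ⟨(y.1.1, y.2.1), ⟨y.1.2, y.2.2⟩⟩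
      left_inv := by intro x; rfl
      right_inv := by intro y; rfl }
  rw [e.finrank_eq, Module.finrank_prod]

def relComp {X Y Z : Type*} [AddCommGroup X] [Module ℝ X] [AddCommGroup Y] [Module ℝ Y]
    [AddCommGroup Z] [Module ℝ Z]
    (L₂ : Submodule ℝ (Y × Z)) (L₁ : Submodule ℝ (X × Y)) : Submodule ℝ (X × Z) where
  carrier := {p | ∃ y : Y, (p.1, y) ∈ L₁ ∧ (y, p.2) ∈ L₂}
  add_mem' := by
    rintro a b ⟨y, h1, h2⟩ ⟨y', h1', h2'⟩
    exact ⟨y + y', L₁.add_mem h1 h1', L₂.add_mem h2 h2'⟩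
  zero_mem' := ⟨0, L₁.zero_mem, L₂.zero_mem⟩
  smul_mem' := by
    rintro c a ⟨y, h1, h2⟩
    exact ⟨c • y, L₁.smul_mem c h1, L₂.smul_mem c h2⟩

/-- the composition of linear canonical relations is a linear canonical
relation. -/
theorem stmt10
    {X Y Z : Type*} [AddCommGroup X] [Module ℝ X] [FiniteDimensional ℝ X]
    [AddCommGroup Y] [Module ℝ Y] [FiniteDimensional ℝ Y]
    [AddCommGroup Z] [Module ℝ Z] [FiniteDimensional ℝ Z]
    (ωX : X →ₗ[ℝ] X →ₗ[ℝ] ℝ) (hXalt : ωX.IsAlt) (hXnd : ωX.Nondegenerate)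
    (ωY : Y →ₗ[ℝ] Y →ₗ[ℝ] ℝ) (hYalt : ωY.IsAlt) (hYnd : ωY.Nondegenerate)
    (ωZ : Z →ₗ[ℝ] Z →ₗ[ℝ] ℝ) (hZalt : ωZ.IsAlt) (hZnd : ωZ.Nondegenerate)
    (L₁ : Submodule ℝ (X × Y)) (hL₁ : L₁ = oOrtho (prodForm ωX ωY) L₁)
    (L₂ : Submodule ℝ (Y × Z)) (hL₂ : L₂ = oOrtho (prodForm ωY ωZ) L₂) :
    relComp L₂ L₁ = oOrtho (prodForm ωX ωZ) (relComp L₂ L₁) := by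
  classical
  -- notation
  set R := relComp L₂ L₁ with hR
  -- the projection (p,q) ↦ (p.1, q.2)
  set T : ((X × Y) × (Y × Z)) →ₗ[ℝ] X × Z :=
    ((LinearMap.fst ℝ X Y).comp (LinearMap.fst ℝ (X × Y) (Y × Z))).prod
      ((LinearMap.snd ℝ Y Z).comp (LinearMap.snd ℝ (X × Y) (Y × Z))) with hT
  -- the difference of middle components
  set φ : ((X × Y) × (Y × Z)) →ₗ[ℝ] Y :=
    ((LinearMap.snd ℝ X Y).comp (LinearMap.fst ℝ (X × Y) (Y × Z))) -
      ((LinearMap.fst ℝ Y Z).comp (LinearMap.snd ℝ (X × Y) (Y × Z))) with hφ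
  have hTapp : ∀ q : (X × Y) × (Y × Z), T q = (q.1.1, q.2.2) := fun q => rfl
  have hφapp : ∀ q : (X × Y) × (Y × Z), φ q = q.1.2 - q.2.1 := fun q => rfl
  set P : Submodule ℝ ((X × Y) × (Y × Z)) := L₁.prod L₂ with hP
  set M : Submodule ℝ ((X × Y) × (Y × Z)) := P ⊓ LinearMap.ker φ with hM
  set S : Submodule ℝ Y := Submodule.map φ P with hS
  set K : Submodule ℝ Y :=
    (Submodule.comap (LinearMap.inr ℝ X Y) L₁) ⊓ (Submodule.comap (LinearMap.inl ℝ Y Z) L₂)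
      with hK
  have hKmem : ∀ y : Y, y ∈ K ↔ ((0, y) ∈ L₁ ∧ (y, 0) ∈ L₂) := by
    intro y
    simp [hK, Submodule.mem_inf, Submodule.mem_comap]
  -- R = map T M
  have hRmap : R = Submodule.map T M := by
    ext p
    constructor
    · rintro ⟨y, h1, h2⟩
      refine ⟨((p.1, y), (y, p.2)), ?_, ?_⟩
      · exact ⟨Submodule.mem_prod.mpr ⟨h1, h2⟩, by simp [LinearMap.mem_ker, hφapp]⟩
      · simp [hTapp]
    · rintro ⟨q, ⟨hq1, hq2⟩, hTq⟩
      have hq2' : q.1.2 = q.2.1 := by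
        have : φ q = 0 := hq2
        rw [hφapp] at this
        exact sub_eq_zero.mp this
      have hq2 := hq2'
      obtain ⟨hqL₁, hqL₂⟩ := Submodule.mem_prod.mp (show q ∈ P from hq1)
      refine ⟨q.1.2, ?_, ?_⟩
      · have : p.1 = q.1.1 := by rw [← hTq, hTapp]
        rw [this]; exact hqL₁
      · have : p.2 = q.2.2 := by rw [← hTq, hTapp]
        rw [this, hq2]; exact hqL₂
  -- K = oOrtho ωY S
  have hKS : K = oOrtho ωY S := by
    ext y
    rw [hKmem, mem_oOrtho_iff]
    constructor
    · rintro ⟨h1, h2⟩ u hu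
      obtain ⟨q, hq, rfl⟩ := hu
      obtain ⟨hqL₁, hqL₂⟩ := Submodule.mem_prod.mp hq
      rw [hL₁] at h1
      rw [hL₂] at h2
      have e1 : ωY y q.1.2 = 0 := by
        have := h1 q.1 hqL₁
        rw [prodForm_apply] at this
        simp only [map_zero, LinearMap.zero_apply] at this
        linarith
      have e2 : ωY y q.2.1 = 0 := by
        have := h2 q.2 hqL₂
        rw [prodForm_apply] at this
        simp only [map_zero, LinearMap.zero_apply] at this
        linarith
      rw [hφapp, map_sub, e1, e2, sub_zero]
    · intro h
      constructor
      · rw [hL₁]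
        intro u hu
        have hmem : u.2 ∈ S := by
          refine ⟨(u, 0), Submodule.mem_prod.mpr ⟨hu, L₂.zero_mem⟩, by simp [hφapp]⟩
        have h0 := h u.2 hmem
        rw [prodForm_apply]
        simp only [map_zero, LinearMap.zero_apply]
        rw [h0]
        ring
      · rw [hL₂]
        intro u hu
        have hmem : -u.1 ∈ S := by
          refine ⟨(0, u), Submodule.mem_prod.mpr ⟨L₁.zero_mem, hu⟩, by simp [hφapp]⟩
        have h1 := h (-u.1) hmem
        rw [map_neg] at h1
        have h1' : ωY y u.1 = 0 := by linarith [h1]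
        rw [prodForm_apply]
        simp only [map_zero, LinearMap.zero_apply]
        rw [h1']
        ring
  -- M ⊓ ker T = map j K
  set j : Y →ₗ[ℝ] (X × Y) × (Y × Z) := (LinearMap.inr ℝ X Y).prod (LinearMap.inl ℝ Y Z) with hj
  have hjapp : ∀ y : Y, j y = ((0, y), (y, 0)) := fun y => rfl
  have hjinj : Function.Injective j := by
    intro a b hab
    have := congrArg (fun q : (X × Y) × (Y × Z) => q.1.2) hab
    simpa [hjapp] using this
  have hMK : M ⊓ LinearMap.ker T = Submodule.map j K := by
    ext q
    constructor
    · rintro ⟨⟨hq1, hq2⟩, hq3⟩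
      have hq2' : q.1.2 = q.2.1 := by
        have : φ q = 0 := hq2
        rw [hφapp] at this
        exact sub_eq_zero.mp this
      have hq3' : q.1.1 = 0 ∧ q.2.2 = 0 := by
        have : T q = 0 := hq3
        rw [hTapp, Prod.mk_eq_zero] at this
        exact this
      have hq2 := hq2'
      have hq3 := hq3'
      obtain ⟨hqL₁, hqL₂⟩ := Submodule.mem_prod.mp (show q ∈ P from hq1)
      refine ⟨q.1.2, ?_, ?_⟩
      · rw [SetLike.mem_coe, hKmem]
        constructor
        · have : ((0 : X), q.1.2) = q.1 := by
            rw [Prod.ext_iff]; exact ⟨hq3.1.symm, rfl⟩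
          rw [this]; exact hqL₁
        · have : (q.1.2, (0 : Z)) = q.2 := by
            rw [Prod.ext_iff]; exact ⟨hq2, hq3.2.symm⟩
          rw [this]; exact hqL₂
      · rw [hjapp, Prod.ext_iff, Prod.ext_iff, Prod.ext_iff]
        exact ⟨⟨hq3.1.symm, rfl⟩, ⟨hq2, hq3.2.symm⟩⟩
    · rintro ⟨y, hy, rfl⟩
      rw [SetLike.mem_coe, hKmem] at hy
      refine ⟨⟨Submodule.mem_prod.mpr ⟨hy.1, hy.2⟩, ?_⟩, ?_⟩
      · show φ (j y) = 0
        rw [hφapp, hjapp]; simp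
      · show T (j y) = 0
        rw [hTapp, hjapp]; simp
  -- dimension bookkeeping
  have dimP : finrank ℝ P = finrank ℝ L₁ + finrank ℝ L₂ := finrank_submodule_prod L₁ L₂
  have rn1 : finrank ℝ S + finrank ℝ M = finrank ℝ P := by
    have h1 := LinearMap.finrank_range_add_finrank_ker (φ.domRestrict P)
    rw [LinearMap.range_domRestrict, LinearMap.ker_domRestrict] at h1
    have h2 : finrank ℝ (Submodule.comap P.subtype (LinearMap.ker φ)) =
        finrank ℝ (P ⊓ LinearMap.ker φ : Submodule ℝ _) := by
      rw [← Submodule.map_comap_subtype]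
      exact (Submodule.finrank_map_subtype_eq P _).symm
    rw [h2] at h1
    exact h1
  have rn2 : finrank ℝ R + finrank ℝ K = finrank ℝ M := by
    have h1 := LinearMap.finrank_range_add_finrank_ker (T.domRestrict M)
    rw [LinearMap.range_domRestrict, LinearMap.ker_domRestrict] at h1
    have h2 : finrank ℝ (Submodule.comap M.subtype (LinearMap.ker T)) =
        finrank ℝ (M ⊓ LinearMap.ker T : Submodule ℝ _) := by
      rw [← Submodule.map_comap_subtype]
      exact (Submodule.finrank_map_subtype_eq M _).symm
    rw [h2, hMK] at h1
    have h3 : finrank ℝ (Submodule.map j K) = finrank ℝ K :=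
      (Submodule.equivMapOfInjective j hjinj K).finrank_eq.symm
    rw [h3, ← hRmap] at h1
    exact h1
  have dimSK : finrank ℝ S + finrank ℝ K = finrank ℝ Y := by
    have := finrank_oOrtho_add ωY hYalt hYnd.1 S
    rw [← hKS] at this
    exact this
  have dimL₁ : finrank ℝ L₁ + finrank ℝ L₁ = finrank ℝ X + finrank ℝ Y := by
    have := finrank_oOrtho_add (prodForm ωX ωY) (prodForm_isAlt hXalt hYalt)
      (prodForm_sep hXnd hYnd) L₁
    rw [← hL₁, Module.finrank_prod] at this
    exact this
  have dimL₂ : finrank ℝ L₂ + finrank ℝ L₂ = finrank ℝ Y + finrank ℝ Z := by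
    have := finrank_oOrtho_add (prodForm ωY ωZ) (prodForm_isAlt hYalt hZalt)
      (prodForm_sep hYnd hZnd) L₂
    rw [← hL₂, Module.finrank_prod] at this
    exact this
  have dimR : finrank ℝ R + finrank ℝ (oOrtho (prodForm ωX ωZ) R) =
      finrank ℝ X + finrank ℝ Z := by
    have := finrank_oOrtho_add (prodForm ωX ωZ) (prodForm_isAlt hXalt hZalt)
      (prodForm_sep hXnd hZnd) R
    rw [Module.finrank_prod] at this
    exact this
  -- isotropy: R ≤ its orthogonal
  have hiso : R ≤ oOrtho (prodForm ωX ωZ) R := by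
    rintro p ⟨y, h1, h2⟩ u ⟨y', h1', h2'⟩
    rw [hL₁] at h1
    rw [hL₂] at h2
    have e1 := h1 (u.1, y') h1'
    have e2 := h2 (y', u.2) h2'
    rw [prodForm_apply] at e1 e2 ⊢
    simp only at e1 e2
    linarith
  exact Submodule.eq_of_le_of_finrank_le hiso (by omega)
end

section
/- Let (V,ω) be a symplectic vector space, L ⊆ V × V a linear canonical relation from V to itself, and A = dom(L) = {v ∈ V : ∃ w, (v,w) ∈ L} its domain. Then for every v ∈ V one has v ∈ A^ω if and only if (v,0) ∈ L. -/
open Submodule Module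

/-- if `L ⊆ V × V` is a linear canonical relation with domain `A`, then
`v ∈ A^ω ↔ (v,0) ∈ L`. -/
theorem stmt11
    {V : Type*} [AddCommGroup V] [Module ℝ V] [FiniteDimensional ℝ V]
    (ω : V →ₗ[ℝ] V →ₗ[ℝ] ℝ) (hωalt : ω.IsAlt) (hωnd : ω.Nondegenerate)
    (L : Submodule ℝ (V × V)) (hL : L = oOrtho (prodForm ω ω) L) :
    ∀ v : V, v ∈ oOrtho ω (Submodule.map (LinearMap.fst ℝ V V) L) ↔ (v, (0 : V)) ∈ L := by
  intro v
  constructor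
  · intro hv
    rw [hL]
    intro p hp
    have h1 : ω v p.1 = 0 := hv p.1 ⟨p, hp, rfl⟩
    show prodForm ω ω (v, 0) p = 0
    simp [prodForm, h1]
  · intro hv u hu
    obtain ⟨p, hp, rfl⟩ := hu
    rw [hL] at hv
    have h := hv p hp
    simp [prodForm] at h
    exact h
end

section
/- (Benenti–Tulczyjew) Let (V,ω) be a symplectic vector space and L ⊆ V × V a linear canonical relation from V to itself, with domain A = {v : ∃ w, (v,w) ∈ L} and range B = {w : ∃ v, (v,w) ∈ L}. Then A and B are coisotropic subspaces of V, and the induced quotient relation [L] ⊆ (A/A^ω) × (B/B^ω), defined by ([a],[b]) ∈ [L] iff (a,b) ∈ L for a ∈ A, b ∈ B, is the graph of a linear symplectomorphism from the reduced symplectic space (A/A^ω,[ω]_A) to the reduced symplectic space (B/B^ω,[ω]_B). -/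
open Submodule Module

/-- The reduced space `W/W^ω` of a subspace `W` (quotient of `W` by `W ∩ W^ω ⊆ W`). -/
abbrev reduced {V : Type*} [AddCommGroup V] [Module ℝ V]
    (ω : V →ₗ[ℝ] V →ₗ[ℝ] ℝ) (W : Submodule ℝ V) :=
  W ⧸ (oOrtho ω W).comap W.subtype

/-- Benenti–Tulczyjew: the domain `A` and range `B` of a linear canonical
relation `L ⊆ V × V` are coisotropic, and the induced quotient relation
`[L] ⊆ (A/A^ω) × (B/B^ω)` is the graph of a linear symplectomorphism between the
reduced symplectic spaces. -/
theorem stmt12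
    {V : Type*} [AddCommGroup V] [Module ℝ V] [FiniteDimensional ℝ V]
    (ω : V →ₗ[ℝ] V →ₗ[ℝ] ℝ) (hωalt : ω.IsAlt) (hωnd : ω.Nondegenerate)
    (L : Submodule ℝ (V × V)) (hL : L = oOrtho (prodForm ω ω) L)
    -- the reduced symplectic forms on A/A^ω and B/B^ω
    (ΩA : reduced ω (Submodule.map (LinearMap.fst ℝ V V) L) →ₗ[ℝ]
          reduced ω (Submodule.map (LinearMap.fst ℝ V V) L) →ₗ[ℝ] ℝ)
    (hΩA : ∀ u v : Submodule.map (LinearMap.fst ℝ V V) L,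
      ΩA (Submodule.Quotient.mk u) (Submodule.Quotient.mk v) = ω (u : V) (v : V))
    (ΩB : reduced ω (Submodule.map (LinearMap.snd ℝ V V) L) →ₗ[ℝ]
          reduced ω (Submodule.map (LinearMap.snd ℝ V V) L) →ₗ[ℝ] ℝ)
    (hΩB : ∀ u v : Submodule.map (LinearMap.snd ℝ V V) L,
      ΩB (Submodule.Quotient.mk u) (Submodule.Quotient.mk v) = ω (u : V) (v : V)) :
    -- A and B are coisotropic
    oOrtho ω (Submodule.map (LinearMap.fst ℝ V V) L) ≤ Submodule.map (LinearMap.fst ℝ V V) L ∧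
    oOrtho ω (Submodule.map (LinearMap.snd ℝ V V) L) ≤ Submodule.map (LinearMap.snd ℝ V V) L ∧
    -- the induced quotient relation is the graph of a linear symplectomorphism
    ∃ φ : reduced ω (Submodule.map (LinearMap.fst ℝ V V) L) ≃ₗ[ℝ]
          reduced ω (Submodule.map (LinearMap.snd ℝ V V) L),
      (∀ x y, ΩB (φ x) (φ y) = ΩA x y) ∧
      (∀ (x : reduced ω (Submodule.map (LinearMap.fst ℝ V V) L))
         (y : reduced ω (Submodule.map (LinearMap.snd ℝ V V) L)),
        (∃ (a : Submodule.map (LinearMap.fst ℝ V V) L)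
           (b : Submodule.map (LinearMap.snd ℝ V V) L),
          Submodule.Quotient.mk a = x ∧ Submodule.Quotient.mk b = y ∧ ((a : V), (b : V)) ∈ L)
          ↔ φ x = y) := by
  classical
  set A := Submodule.map (LinearMap.fst ℝ V V) L with hAdef
  set B := Submodule.map (LinearMap.snd ℝ V V) L with hBdef
  have memL : ∀ p : V × V, p ∈ L ↔ ∀ q ∈ L, ω p.1 q.1 - ω p.2 q.2 = 0 := by
    intro p
    conv_lhs => rw [hL]
    exact Iff.rfl
  have hAo : ∀ v : V, v ∈ oOrtho ω A ↔ (v, (0 : V)) ∈ L := by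
    intro v
    rw [memL]
    constructor
    · intro hv q hq
      have h1 : q.1 ∈ A := ⟨q, hq, rfl⟩
      simp [hv q.1 h1]
    · intro h u hu
      obtain ⟨q, hq, rfl⟩ := hu
      have := h q hq
      simpa using this
  have hBo : ∀ w : V, w ∈ oOrtho ω B ↔ ((0 : V), w) ∈ L := by
    intro w
    rw [memL]
    constructor
    · intro hw q hq
      have h2 : q.2 ∈ B := ⟨q, hq, rfl⟩
      simp [hw q.2 h2]
    · intro h u hu
      obtain ⟨q, hq, rfl⟩ := hu
      have := h q hq
      simp at this
      exact this
  have hcoA : oOrtho ω A ≤ A := fun v hv => ⟨(v, 0), (hAo v).1 hv, rfl⟩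
  have hcoB : oOrtho ω B ≤ B := fun w hw => ⟨(0, w), (hBo w).1 hw, rfl⟩
  -- well-definedness
  have wd : ∀ p ∈ L, ∀ q ∈ L, p.1 - q.1 ∈ oOrtho ω A → p.2 - q.2 ∈ oOrtho ω B := by
    intro p hp q hq h1
    rw [hBo]
    have h2 : ((p.1 - q.1 : V), (0 : V)) ∈ L := (hAo _).1 h1
    have h3 : p - q ∈ L := sub_mem hp hq
    have h4 : (p - q) - (p.1 - q.1, (0 : V)) = ((0 : V), p.2 - q.2) := by
      ext <;> simp
    rw [← h4]
    exact sub_mem h3 h2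
  have wd' : ∀ p ∈ L, ∀ q ∈ L, p.2 - q.2 ∈ oOrtho ω B → p.1 - q.1 ∈ oOrtho ω A := by
    intro p hp q hq h1
    rw [hAo]
    have h2 : ((0 : V), (p.2 - q.2 : V)) ∈ L := (hBo _).1 h1
    have h3 : p - q ∈ L := sub_mem hp hq
    have h4 : (p - q) - ((0 : V), p.2 - q.2) = ((p.1 - q.1 : V), (0 : V)) := by
      ext <;> simp
    rw [← h4]
    exact sub_mem h3 h2
  -- raw function A → reduced B
  let pick : (a : A) → V × V := fun a => (Submodule.mem_map.mp a.2).choose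
  have pickL : ∀ a : A, pick a ∈ L := fun a => (Submodule.mem_map.mp a.2).choose_spec.1
  have pick1 : ∀ a : A, (pick a).1 = (a : V) := fun a => (Submodule.mem_map.mp a.2).choose_spec.2
  let f : A → reduced ω B := fun a =>
    Submodule.Quotient.mk ⟨(pick a).2, ⟨pick a, pickL a, rfl⟩⟩
  have key : ∀ (a : A) (p : V × V) (hp : p ∈ L), p.1 = (a : V) →
      f a = Submodule.Quotient.mk ⟨p.2, ⟨p, hp, rfl⟩⟩ := by
    intro a p hp hpa
    apply (Submodule.Quotient.eq _).2
    have : (pick a).2 - p.2 ∈ oOrtho ω B := by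
      apply wd _ (pickL a) _ hp
      rw [pick1 a, hpa, sub_self]
      exact zero_mem _
    simpa using this
  have fadd : ∀ a b : A, f (a + b) = f a + f b := by
    intro a b
    have h1 : pick a + pick b ∈ L := add_mem (pickL a) (pickL b)
    have h2 : (pick a + pick b).1 = ((a + b : A) : V) := by
      simp [pick1 a, pick1 b]
    rw [key (a + b) _ h1 h2, key a _ (pickL a) (pick1 a), key b _ (pickL b) (pick1 b)]
    rw [← Submodule.Quotient.mk_add]
    rfl
  have fsmul : ∀ (c : ℝ) (a : A), f (c • a) = c • f a := by
    intro c a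
    have h1 : c • pick a ∈ L := smul_mem _ _ (pickL a)
    have h2 : (c • pick a).1 = ((c • a : A) : V) := by
      simp [pick1 a]
    rw [key (c • a) _ h1 h2, key a _ (pickL a) (pick1 a)]
    rw [← Submodule.Quotient.mk_smul]
    rfl
  let F : A →ₗ[ℝ] reduced ω B :=
    { toFun := f, map_add' := fadd, map_smul' := fsmul }
  have hFker : (oOrtho ω A).comap A.subtype ≤ LinearMap.ker F := by
    intro a ha
    have ha' : (a : V) ∈ oOrtho ω A := ha
    have h1 : ((a : V), (0 : V)) ∈ L := (hAo _).1 ha'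
    have : F a = Submodule.Quotient.mk ⟨(0 : V), ⟨((a:V), 0), h1, rfl⟩⟩ :=
      key a _ h1 rfl
    rw [LinearMap.mem_ker, this]
    exact (Submodule.Quotient.mk_eq_zero _).2 (by simpa using zero_mem _)
  let φ : reduced ω A →ₗ[ℝ] reduced ω B := Submodule.liftQ _ F hFker
  have φprop : ∀ (p : V × V) (hp : p ∈ L) (ha : p.1 ∈ A) (hb : p.2 ∈ B),
      φ (Submodule.Quotient.mk ⟨p.1, ha⟩) = Submodule.Quotient.mk ⟨p.2, hb⟩ := by
    intro p hp ha hb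
    have : φ (Submodule.Quotient.mk ⟨p.1, ha⟩) = F ⟨p.1, ha⟩ := rfl
    rw [this, show F ⟨p.1, ha⟩ = f ⟨p.1, ha⟩ from rfl, key ⟨p.1, ha⟩ p hp rfl]
  -- symmetric direction
  let pick' : (b : B) → V × V := fun b => (Submodule.mem_map.mp b.2).choose
  have pickL' : ∀ b : B, pick' b ∈ L := fun b => (Submodule.mem_map.mp b.2).choose_spec.1
  have pick2' : ∀ b : B, (pick' b).2 = (b : V) := fun b => (Submodule.mem_map.mp b.2).choose_spec.2
  let g : B → reduced ω A := fun b =>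
    Submodule.Quotient.mk ⟨(pick' b).1, ⟨pick' b, pickL' b, rfl⟩⟩
  have key' : ∀ (b : B) (p : V × V) (hp : p ∈ L), p.2 = (b : V) →
      g b = Submodule.Quotient.mk ⟨p.1, ⟨p, hp, rfl⟩⟩ := by
    intro b p hp hpb
    apply (Submodule.Quotient.eq _).2
    have : (pick' b).1 - p.1 ∈ oOrtho ω A := by
      apply wd' _ (pickL' b) _ hp
      rw [pick2' b, hpb, sub_self]
      exact zero_mem _
    simpa using this
  have gadd : ∀ a b : B, g (a + b) = g a + g b := by
    intro a b
    have h1 : pick' a + pick' b ∈ L := add_mem (pickL' a) (pickL' b)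
    have h2 : (pick' a + pick' b).2 = ((a + b : B) : V) := by
      simp [pick2' a, pick2' b]
    rw [key' (a + b) _ h1 h2, key' a _ (pickL' a) (pick2' a), key' b _ (pickL' b) (pick2' b)]
    rw [← Submodule.Quotient.mk_add]
    rfl
  have gsmul : ∀ (c : ℝ) (a : B), g (c • a) = c • g a := by
    intro c a
    have h1 : c • pick' a ∈ L := smul_mem _ _ (pickL' a)
    have h2 : (c • pick' a).2 = ((c • a : B) : V) := by
      simp [pick2' a]
    rw [key' (c • a) _ h1 h2, key' a _ (pickL' a) (pick2' a)]
    rw [← Submodule.Quotient.mk_smul]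
    rfl
  let G : B →ₗ[ℝ] reduced ω A :=
    { toFun := g, map_add' := gadd, map_smul' := gsmul }
  have hGker : (oOrtho ω B).comap B.subtype ≤ LinearMap.ker G := by
    intro b hb
    have hb' : (b : V) ∈ oOrtho ω B := hb
    have h1 : ((0 : V), (b : V)) ∈ L := (hBo _).1 hb'
    have : G b = Submodule.Quotient.mk ⟨(0 : V), ⟨(0, (b:V)), h1, rfl⟩⟩ :=
      key' b _ h1 rfl
    rw [LinearMap.mem_ker, this]
    exact (Submodule.Quotient.mk_eq_zero _).2 (by simpa using zero_mem _)
  let ψ : reduced ω B →ₗ[ℝ] reduced ω A := Submodule.liftQ _ G hGker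
  have ψprop : ∀ (p : V × V) (hp : p ∈ L) (ha : p.1 ∈ A) (hb : p.2 ∈ B),
      ψ (Submodule.Quotient.mk ⟨p.2, hb⟩) = Submodule.Quotient.mk ⟨p.1, ha⟩ := by
    intro p hp ha hb
    have : ψ (Submodule.Quotient.mk ⟨p.2, hb⟩) = G ⟨p.2, hb⟩ := rfl
    rw [this, show G ⟨p.2, hb⟩ = g ⟨p.2, hb⟩ from rfl, key' ⟨p.2, hb⟩ p hp rfl]
  -- mutual inverses
  have hψφ : ∀ x, ψ (φ x) = x := by
    intro x
    obtain ⟨a, rfl⟩ := Submodule.Quotient.mk_surjective _ x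
    obtain ⟨p, hp, hpa⟩ := Submodule.mem_map.mp a.2
    have ha : p.1 ∈ A := ⟨p, hp, rfl⟩
    have hb : p.2 ∈ B := ⟨p, hp, rfl⟩
    have hax : (⟨p.1, ha⟩ : A) = a := Subtype.ext hpa
    rw [← hax, φprop p hp ha hb, ψprop p hp ha hb]
  have hφψ : ∀ y, φ (ψ y) = y := by
    intro y
    obtain ⟨b, rfl⟩ := Submodule.Quotient.mk_surjective _ y
    obtain ⟨p, hp, hpb⟩ := Submodule.mem_map.mp b.2
    have ha : p.1 ∈ A := ⟨p, hp, rfl⟩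
    have hb : p.2 ∈ B := ⟨p, hp, rfl⟩
    have hbx : (⟨p.2, hb⟩ : B) = b := Subtype.ext hpb
    rw [← hbx, ψprop p hp ha hb, φprop p hp ha hb]
  let Φ : reduced ω A ≃ₗ[ℝ] reduced ω B :=
    LinearEquiv.ofLinear φ ψ (LinearMap.ext hφψ) (LinearMap.ext hψφ)
  refine ⟨hcoA, hcoB, Φ, ?_, ?_⟩
  · intro x y
    obtain ⟨a, rfl⟩ := Submodule.Quotient.mk_surjective _ x
    obtain ⟨a', rfl⟩ := Submodule.Quotient.mk_surjective _ y
    obtain ⟨p, hp, hpa⟩ := Submodule.mem_map.mp a.2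
    obtain ⟨q, hq, hqa⟩ := Submodule.mem_map.mp a'.2
    have ha : p.1 ∈ A := ⟨p, hp, rfl⟩
    have hb : p.2 ∈ B := ⟨p, hp, rfl⟩
    have ha' : q.1 ∈ A := ⟨q, hq, rfl⟩
    have hb' : q.2 ∈ B := ⟨q, hq, rfl⟩
    have hax : (⟨p.1, ha⟩ : A) = a := Subtype.ext hpa
    have hax' : (⟨q.1, ha'⟩ : A) = a' := Subtype.ext hqa
    have hΦ : Φ (Submodule.Quotient.mk a) = Submodule.Quotient.mk (⟨p.2, hb⟩ : B) := by
      show φ (Submodule.Quotient.mk a) = _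
      rw [← hax, φprop p hp ha hb]
    have hΦ' : Φ (Submodule.Quotient.mk a') = Submodule.Quotient.mk (⟨q.2, hb'⟩ : B) := by
      show φ (Submodule.Quotient.mk a') = _
      rw [← hax', φprop q hq ha' hb']
    rw [hΦ, hΦ', hΩB, ← hax, ← hax', hΩA]
    have := (memL p).1 hp q hq
    simp only []
    linarith
  · intro x y
    constructor
    · rintro ⟨a, b, rfl, rfl, hab⟩
      have ha : ((a : V), (b : V)).1 ∈ A := ⟨_, hab, rfl⟩
      have hb : ((a : V), (b : V)).2 ∈ B := ⟨_, hab, rfl⟩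
      have hax : (⟨((a : V), (b : V)).1, ha⟩ : A) = a := Subtype.ext rfl
      have hbx : (⟨((a : V), (b : V)).2, hb⟩ : B) = b := Subtype.ext rfl
      show φ _ = _
      rw [← hax, φprop _ hab ha hb, hbx]
    · rintro rfl
      obtain ⟨a, rfl⟩ := Submodule.Quotient.mk_surjective _ x
      obtain ⟨p, hp, hpa⟩ := Submodule.mem_map.mp a.2
      have ha : p.1 ∈ A := ⟨p, hp, rfl⟩
      have hb : p.2 ∈ B := ⟨p, hp, rfl⟩
      have hax : (⟨p.1, ha⟩ : A) = a := Subtype.ext hpa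
      refine ⟨a, ⟨p.2, hb⟩, rfl, ?_, ?_⟩
      · show Submodule.Quotient.mk _ = φ _
        rw [← hax, φprop p hp ha hb]
      · rw [← hpa]
        exact hp
end

section
/- Let (V,ω) be a symplectic vector space, L ⊆ V × V a linear canonical relation from V to itself with domain A and range B, and let A₁, B₁ be subspaces with A = A^ω ⊕ A₁ and B = B^ω ⊕ B₁. For u ∈ A write u = u₀ + u₁ with u₀ ∈ A^ω, u₁ ∈ A₁, and for u ∈ B write u = u₀ + u₁ with u₀ ∈ B^ω, u₁ ∈ B₁. Then (v,w) ∈ L implies (v₁,w₁) ∈ L. -/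
open Submodule Module

/-- if `L ⊆ V × V` is a linear canonical relation with domain `A` and range
`B`, `A = A^ω ⊕ A₁`, `B = B^ω ⊕ B₁`, and `(v,w) ∈ L` with decompositions `v = v₀ + v₁`,
`w = w₀ + w₁`, then `(v₁,w₁) ∈ L`. -/
theorem stmt13
    {V : Type*} [AddCommGroup V] [Module ℝ V] [FiniteDimensional ℝ V]
    (ω : V →ₗ[ℝ] V →ₗ[ℝ] ℝ) (hωalt : ω.IsAlt) (hωnd : ω.Nondegenerate)
    (L : Submodule ℝ (V × V)) (hL : L = oOrtho (prodForm ω ω) L)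
    (A₁ B₁ : Submodule ℝ V)
    -- A = A^ω ⊕ A₁
    (hA₁ : oOrtho ω (Submodule.map (LinearMap.fst ℝ V V) L) ⊓ A₁ = ⊥)
    (hA₂ : oOrtho ω (Submodule.map (LinearMap.fst ℝ V V) L) ⊔ A₁ =
      Submodule.map (LinearMap.fst ℝ V V) L)
    -- B = B^ω ⊕ B₁
    (hB₁ : oOrtho ω (Submodule.map (LinearMap.snd ℝ V V) L) ⊓ B₁ = ⊥)
    (hB₂ : oOrtho ω (Submodule.map (LinearMap.snd ℝ V V) L) ⊔ B₁ =
      Submodule.map (LinearMap.snd ℝ V V) L) :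
    ∀ v w v₀ v₁ w₀ w₁ : V, (v, w) ∈ L →
      v₀ ∈ oOrtho ω (Submodule.map (LinearMap.fst ℝ V V) L) → v₁ ∈ A₁ → v = v₀ + v₁ →
      w₀ ∈ oOrtho ω (Submodule.map (LinearMap.snd ℝ V V) L) → w₁ ∈ B₁ → w = w₀ + w₁ →
      (v₁, w₁) ∈ L := by
  intro v w v₀ v₁ w₀ w₁ hvw hv₀ _ hv hw₀ _ hw
  have h1 : ((v₀ : V), (0 : V)) ∈ L := by
    rw [hL]
    intro u hu
    show prodForm ω ω (v₀, 0) u = 0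
    have : ω v₀ u.1 = 0 := hv₀ u.1 ⟨u, hu, rfl⟩
    simp [prodForm, this]
  have h2 : ((0 : V), (w₀ : V)) ∈ L := by
    rw [hL]
    intro u hu
    show prodForm ω ω (0, w₀) u = 0
    have : ω w₀ u.2 = 0 := hw₀ u.2 ⟨u, hu, rfl⟩
    simp [prodForm, this]
  have : (v₁, w₁) = (v, w) - (v₀, 0) - (0, w₀) := by
    simp [Prod.ext_iff, hv, hw]; try constructor <;> ring
    try ring
  rw [this]
  exact sub_mem (sub_mem hvw h1) h2
end

section
/- Let (A,B) be a coisotropic pair in a symplectic vector space (V,ω) which is of one of the five elementary types λ, δ, σ, μ_B, μ_A. Suppose (A,B) = ⊕ᵢ₌₁ᵐ (Aᵢ,Bᵢ) is a direct sum decomposition of (A,B) subordinate to an ω-orthogonal decomposition V = ⊕ᵢ₌₁ᵐ Vᵢ into symplectic subspaces, where each (Aᵢ,Bᵢ) is a coisotropic pair in (Vᵢ, ω|_{Vᵢ}). Then every summand pair (Aᵢ,Bᵢ) is of the same elementary type as (A,B). -/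
open Submodule Module

/-- `X` is a lagrangian subspace of the symplectic subspace `U` (w.r.t. the restricted
form): `X` equals its orthogonal taken inside `U`. -/
def IsLagrangianIn {V : Type*} [AddCommGroup V] [Module ℝ V]
    (ω : V →ₗ[ℝ] V →ₗ[ℝ] ℝ) (U X : Submodule ℝ V) : Prop :=
  X ≤ U ∧ X = oOrtho ω X ⊓ U

/-- The five elementary types of coisotropic pairs. -/
inductive ElemType | lam | delta | sigma | muB | muA

/-- The coisotropic pair `(A,B)` in the symplectic subspace `U` is of the given
elementary type. -/
def IsOfTypeIn {V : Type*} [AddCommGroup V] [Module ℝ V]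
    (ω : V →ₗ[ℝ] V →ₗ[ℝ] ℝ) (U A B : Submodule ℝ V) : ElemType → Prop
  | .lam => IsLagrangianIn ω U A ∧ IsLagrangianIn ω U B ∧ A = B
  | .delta => IsLagrangianIn ω U A ∧ IsLagrangianIn ω U B ∧ A ⊓ B = ⊥
  | .sigma => A = U ∧ B = U
  | .muB => B = U ∧ IsLagrangianIn ω U A
  | .muA => A = U ∧ IsLagrangianIn ω U B

private lemma sup_inter_eq' {V : Type*} [AddCommGroup V] [Module ℝ V] {m : ℕ}
    (Vs As : Fin m → Submodule ℝ V) (hVindep : iSupIndep Vs)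
    (hAle : ∀ i, As i ≤ Vs i) (i : Fin m) :
    (⨆ j, As j) ⊓ Vs i = As i := by
  apply le_antisymm
  · rintro v ⟨hvA, hvV⟩
    obtain ⟨f, hf, hsum⟩ := (Submodule.mem_iSup_iff_exists_finsupp _ _).mp hvA
    have hsum' : ∑ j, f j = v := by
      rw [← hsum, Finsupp.sum_fintype]; intro; rfl
    have h1 : v - f i ∈ Vs i := sub_mem hvV (hAle i (hf i))
    have h2 : v - f i ∈ ⨆ j, ⨆ _ : j ≠ i, Vs j := by
      have heq : v - f i = ∑ j ∈ Finset.univ.erase i, f j := by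
        rw [← hsum', Finset.sum_erase_eq_sub (Finset.mem_univ i)]
      rw [heq]
      refine Submodule.sum_mem _ fun j hj => ?_
      exact Submodule.mem_iSup_of_mem j
        (Submodule.mem_iSup_of_mem (Finset.ne_of_mem_erase hj) (hAle j (hf j)))
    have h0 : v - f i = 0 := by
      simpa using (hVindep i).le_bot ⟨h1, h2⟩
    have : v = f i := by linear_combination (norm := module) h0
    exact this ▸ hf i
  · exact le_inf (le_iSup As i) (hAle i)

private lemma ortho_iff' {V : Type*} [AddCommGroup V] [Module ℝ V] {m : ℕ}
    (ω : V →ₗ[ℝ] V →ₗ[ℝ] ℝ) (Vs As : Fin m → Submodule ℝ V)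
    (hVorth : ∀ i j, i ≠ j → ∀ v ∈ Vs i, ∀ u ∈ Vs j, ω v u = 0)
    (hAle : ∀ i, As i ≤ Vs i) (i : Fin m) {v : V} (hv : v ∈ Vs i) :
    v ∈ oOrtho ω (⨆ j, As j) ↔ v ∈ oOrtho ω (As i) := by
  constructor
  · intro h u hu; exact h u (Submodule.mem_iSup_of_mem i hu)
  · intro h u hu
    refine Submodule.iSup_induction (motive := fun u => ω v u = 0) As hu ?_ (by simp) ?_
    · intro j u hu
      rcases eq_or_ne i j with rfl | hij
      · exact h u hu
      · exact hVorth i j hij v hv u (hAle j hu)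
    · intro x y hx hy; rw [map_add, hx, hy, add_zero]

/-- if a coisotropic pair `(A,B)` of elementary type `τ` decomposes as a
direct sum of coisotropic pairs `(Aᵢ,Bᵢ)` subordinate to an ω-orthogonal decomposition
`V = ⊕ᵢ Vᵢ` into symplectic subspaces, then every `(Aᵢ,Bᵢ)` is of type `τ` in `Vᵢ`. -/
theorem stmt17
    {V : Type*} [AddCommGroup V] [Module ℝ V] [FiniteDimensional ℝ V]
    (ω : V →ₗ[ℝ] V →ₗ[ℝ] ℝ) (hωalt : ω.IsAlt) (hωnd : ω.Nondegenerate)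
    (m : ℕ) (Vs As Bs : Fin m → Submodule ℝ V)
    -- V = ⊕ᵢ Vᵢ is an ω-orthogonal decomposition into symplectic subspaces
    (hVindep : iSupIndep Vs) (hVsup : ⨆ i, Vs i = ⊤)
    (hVorth : ∀ i j, i ≠ j → ∀ v ∈ Vs i, ∀ u ∈ Vs j, ω v u = 0)
    (hVsympl : ∀ i, Vs i ⊓ oOrtho ω (Vs i) = ⊥)
    -- each (Aᵢ,Bᵢ) is a coisotropic pair in (Vᵢ, ω|_{Vᵢ})
    (hAle : ∀ i, As i ≤ Vs i) (hBle : ∀ i, Bs i ≤ Vs i)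
    (hAco : ∀ i, oOrtho ω (As i) ⊓ Vs i ≤ As i)
    (hBco : ∀ i, oOrtho ω (Bs i) ⊓ Vs i ≤ Bs i)
    -- (A,B) is the direct sum of the pairs (Aᵢ,Bᵢ)
    (A B : Submodule ℝ V) (hA : A = ⨆ i, As i) (hB : B = ⨆ i, Bs i)
    -- (A,B) is a coisotropic pair in V of elementary type τ
    (hAcoV : oOrtho ω A ≤ A) (hBcoV : oOrtho ω B ≤ B)
    (τ : ElemType) (hτ : IsOfTypeIn ω ⊤ A B τ) :
    ∀ i, IsOfTypeIn ω (Vs i) (As i) (Bs i) τ := by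
  subst hA hB
  have hAi : ∀ i, (⨆ j, As j) ⊓ Vs i = As i := sup_inter_eq' Vs As hVindep hAle
  have hBi : ∀ i, (⨆ j, Bs j) ⊓ Vs i = Bs i := sup_inter_eq' Vs Bs hVindep hBle
  have lag : ∀ (Xs : Fin m → Submodule ℝ V), (∀ i, Xs i ≤ Vs i) →
      IsLagrangianIn ω ⊤ (⨆ j, Xs j) → ∀ i, IsLagrangianIn ω (Vs i) (Xs i) := by
    intro Xs hXle hL i
    have hXi : ∀ i, (⨆ j, Xs j) ⊓ Vs i = Xs i := sup_inter_eq' Vs Xs hVindep hXle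
    have hX : (⨆ j, Xs j) = oOrtho ω (⨆ j, Xs j) := by
      conv_lhs => rw [hL.2, inf_top_eq]
    refine ⟨hXle i, le_antisymm ?_ ?_⟩
    · intro v hv
      refine ⟨?_, hXle i hv⟩
      have hvA : v ∈ oOrtho ω (⨆ j, Xs j) := by
        rw [← hX]; exact Submodule.mem_iSup_of_mem i hv
      intro u hu
      exact hvA u (Submodule.mem_iSup_of_mem i hu)
    · rintro v ⟨hvo, hvV⟩
      rw [← hXi i]
      refine ⟨?_, hvV⟩
      rw [hX]
      exact (ortho_iff' ω Vs Xs hVorth hXle i hvV).mpr hvo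
  have top : ∀ (Xs : Fin m → Submodule ℝ V), (∀ i, Xs i ≤ Vs i) →
      (⨆ j, Xs j) = ⊤ → ∀ i, Xs i = Vs i := by
    intro Xs hXle hX i
    have hXi := sup_inter_eq' Vs Xs hVindep hXle i
    rw [hX, top_inf_eq] at hXi
    exact hXi.symm
  intro i
  cases τ with
  | lam =>
    obtain ⟨hLA, hLB, hAB⟩ := hτ
    refine ⟨lag As hAle hLA i, lag Bs hBle hLB i, ?_⟩
    rw [← hAi i, ← hBi i, hAB]
  | delta =>
    obtain ⟨hLA, hLB, hAB⟩ := hτ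
    refine ⟨lag As hAle hLA i, lag Bs hBle hLB i, ?_⟩
    refine le_antisymm ?_ bot_le
    refine le_trans ?_ hAB.le
    exact inf_le_inf (le_iSup As i) (le_iSup Bs i)
  | sigma =>
    obtain ⟨hA, hB⟩ := hτ
    exact ⟨top As hAle hA i, top Bs hBle hB i⟩
  | muB =>
    obtain ⟨hB, hLA⟩ := hτ
    exact ⟨top Bs hBle hB i, lag As hAle hLA i⟩
  | muA =>
    obtain ⟨hA, hLB⟩ := hτ
    exact ⟨top As hAle hA i, lag Bs hBle hLB i⟩
end
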